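/- arXiv:0804.1587 — 4 statements merged into one kernel-verified Lean document; each statement's English description precedes it below -/
import Mathlib

section
/- If T is a semistandard Young tableau of shape λ and m_i(w_T) > 0, then the filling ẽ_i(T) obtained by changing the entry i at the rightmost maximizing position of the reading word to i−1 is again a semistandard Young tableau of shape λ. -/
/-- A semistandard Young tableau (French convention), listed as rows from top
to bottom: positive entries, rows weakly increasing, row lengths weakly
increasing downwards, and entries strictly increasing up columns. -/
def IsSSYT (rows : List (List ℕ)) : Prop :=
  (∀ r ∈ rows, ∀ x ∈ r, 1 ≤ x) ∧
  (∀ r ∈ rows, r.Chain' (· ≤ ·)) ∧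
  rows.Chain' (fun upper lower =>
    upper.length ≤ lower.length ∧
    ∀ c < upper.length, lower.getD c 0 < upper.getD c 0)

/-- The reading word: rows read from top to bottom, left to right. -/
def readingWord (rows : List (List ℕ)) : List ℕ := rows.flatten

def mi (i : ℕ) (w : List ℕ) (r : ℕ) : ℤ :=
  ((w.drop r).count i : ℤ) - ((w.drop r).count (i - 1) : ℤ)

noncomputable def miMax (i : ℕ) (w : List ℕ) : ℤ :=
  sSup {m : ℤ | ∃ r < w.length, mi i w r = m}

noncomputable def rightPos (i : ℕ) (w : List ℕ) : ℕ :=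
  sSup {r : ℕ | r < w.length ∧ mi i w r = miMax i w}

noncomputable def etildeW (i : ℕ) (w : List ℕ) : List ℕ :=
  w.set (rightPos i w) (i - 1)

/-- Change the p-th entry (in reading-word order) of a tableau to v. -/
def setEntry : List (List ℕ) → ℕ → ℕ → List (List ℕ)
  | [], _, _ => []
  | r :: rs, p, v =>
      if p < r.length then r.set p v :: rs else r :: setEntry rs (p - r.length) v

lemma mi_split (i : ℕ) (w : List ℕ) (p n : ℕ) :
    mi i w p = (((w.drop p).take n).count i : ℤ) -
      (((w.drop p).take n).count (i-1) : ℤ) + mi i w (p+n) := by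
  have h : w.drop p = (w.drop p).take n ++ w.drop (p+n) := by
    conv_lhs => rw [← List.take_append_drop n (w.drop p)]
    rw [List.drop_drop, Nat.add_comm]
  rw [mi, mi]
  conv_lhs => rw [h]
  rw [List.count_append, List.count_append]
  push_cast
  ring

lemma miMax_bdd (i : ℕ) (w : List ℕ) :
    BddAbove {m : ℤ | ∃ r < w.length, mi i w r = m} := by
  have : {m : ℤ | ∃ r < w.length, mi i w r = m} = (mi i w) '' Set.Iio w.length := by
    ext m; rfl
  rw [this]
  exact ((Set.finite_Iio _).image _).bddAbove

lemma mi_le_max (i : ℕ) (w : List ℕ) (r : ℕ) (hr : r < w.length) :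
    mi i w r ≤ miMax i w :=
  le_csSup (miMax_bdd i w) ⟨r, hr, rfl⟩

lemma rightPos_spec (i : ℕ) (w : List ℕ) (hpos : 0 < miMax i w) :
    rightPos i w < w.length ∧ mi i w (rightPos i w) = miMax i w ∧
      ∀ r, r < w.length → mi i w r = miMax i w → r ≤ rightPos i w := by
  have hfin : {m : ℤ | ∃ r < w.length, mi i w r = m}.Finite := by
    have : {m : ℤ | ∃ r < w.length, mi i w r = m} = (mi i w) '' Set.Iio w.length := by
      ext m; rfl
    rw [this]; exact (Set.finite_Iio _).image _
  have hne : {m : ℤ | ∃ r < w.length, mi i w r = m}.Nonempty := by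
    by_contra h
    rw [Set.not_nonempty_iff_eq_empty] at h
    rw [miMax, h, Int.csSup_empty] at hpos
    exact lt_irrefl 0 hpos
  have hmem := hne.csSup_mem hfin
  obtain ⟨r₀, hr₀, hmi₀⟩ := hmem
  have hRne : {r : ℕ | r < w.length ∧ mi i w r = miMax i w}.Nonempty := ⟨r₀, hr₀, hmi₀⟩
  have hRbdd : BddAbove {r : ℕ | r < w.length ∧ mi i w r = miMax i w} :=
    ⟨w.length, fun r hr => le_of_lt hr.1⟩
  have hp := Nat.sSup_mem hRne hRbdd
  exact ⟨hp.1, hp.2, fun r h1 h2 => le_csSup hRbdd ⟨h1, h2⟩⟩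

-- key contradiction lemma
lemma key (i : ℕ) (w : List ℕ) (hpos : 0 < miMax i w) (n : ℕ) (hn : 1 ≤ n)
    (hcount : ((w.drop (rightPos i w)).take n).count i ≤
      ((w.drop (rightPos i w)).take n).count (i-1)) : False := by
  obtain ⟨hplt, hpmi, hpmax⟩ := rightPos_spec i w hpos
  set p := rightPos i w with hp
  have hsplit := mi_split i w p n
  have h1 : mi i w p ≤ mi i w (p + n) := by
    omega
  by_cases hs : p + n < w.length
  · have h2 : mi i w (p+n) ≤ miMax i w := mi_le_max i w _ hs
    have h3 : mi i w (p+n) = miMax i w := le_antisymm h2 (hpmi ▸ h1)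
    have := hpmax (p+n) hs h3
    omega
  · have hnil : w.drop (p+n) = [] := List.drop_eq_nil_of_le (by omega)
    have h0 : mi i w (p+n) = 0 := by rw [mi, hnil]; simp
    rw [h0, hpmi] at h1
    omega

lemma seg_one (w : List ℕ) (k : ℕ) (hk : k < w.length) :
    (w.drop k).take 1 = [w.getD k 0] := by
  rw [List.drop_eq_getElem_cons hk, List.getD_eq_getElem _ _ hk]
  rfl

lemma entry_eq (i : ℕ) (w : List ℕ) (hpos : 0 < miMax i w) :
    w.getD (rightPos i w) 0 = i := by
  by_contra hne
  obtain ⟨hplt, _, _⟩ := rightPos_spec i w hpos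
  apply key i w hpos 1 le_rfl
  rw [seg_one w _ hplt]
  have hni : i ∉ [w.getD (rightPos i w) 0] :=
    fun h => hne (List.mem_singleton.mp h).symm
  rw [List.count_eq_zero.mpr hni]
  exact Nat.zero_le _

lemma left_ne (i : ℕ) (hi : 2 ≤ i) (w : List ℕ) (hpos : 0 < miMax i w) (k : ℕ)
    (hk : k + 1 = rightPos i w) : w.getD k 0 ≠ i := by
  intro hiq
  obtain ⟨hplt, hpmi, hpmax⟩ := rightPos_spec i w hpos
  have hk' : k < w.length := by omega
  have hs := mi_split i w k 1
  rw [seg_one w k hk', hiq, hk, hpmi] at hs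
  have h1 : List.count i [i] = 1 := by simp
  have h2 : List.count (i-1) [i] = 0 := by
    have : i - 1 ∉ [i] := by simp; omega
    exact List.count_eq_zero.mpr this
  rw [h1, h2] at hs
  have hle := mi_le_max i w k hk'
  omega

-- sorted getD monotone
lemma sorted_getD_mono {l : List ℕ} (h : l.Chain' (· ≤ ·)) {j k : ℕ}
    (hjk : j ≤ k) (hk : k < l.length) : l.getD j 0 ≤ l.getD k 0 := by
  rcases eq_or_lt_of_le hjk with rfl | hlt
  · exact le_refl _
  · have hj : j < l.length := lt_trans hlt hk
    rw [List.getD_eq_getElem _ _ hj, List.getD_eq_getElem _ _ hk]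
    exact List.pairwise_iff_getElem.mp (List.isChain_iff_pairwise.mp h) j k hj hk hlt

-- all elements of a sorted list bounded by a later element
lemma sorted_le_of_append {a : List ℕ} {i : ℕ} {b : List ℕ}
    (h : (a ++ i :: b).Chain' (· ≤ ·)) : ∀ x ∈ a, x ≤ i := by
  have hp := List.isChain_iff_pairwise.mp h
  rw [List.pairwise_append] at hp
  exact fun x hx => hp.2.2 x hx i (List.mem_cons_self)

-- block lemma
lemma block_lemma (i : ℕ) : ∀ b : List ℕ, (i :: b).Chain' (· ≤ ·) →
    ∃ m rest, i :: b = List.replicate m i ++ rest ∧ (i :: b).count i = m ∧ 1 ≤ m := by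
  intro b
  induction b with
  | nil => exact fun _ => ⟨1, [], by simp, by simp, le_refl 1⟩
  | cons x u ih =>
    intro h
    rw [List.Chain', List.isChain_cons_cons] at h
    rcases eq_or_lt_of_le h.1 with rfl | hlt
    · obtain ⟨m, rest, heq, hc, hm⟩ := ih h.2
      refine ⟨m+1, rest, ?_, ?_, by omega⟩
      · rw [List.replicate_succ, List.cons_append, ← heq]
      · rw [List.count_cons_self, hc]
    · refine ⟨1, x :: u, by simp, ?_, le_refl 1⟩
      have hall : ∀ y ∈ x :: u, i < y := by
        intro y hy
        rcases List.mem_cons.mp hy with rfl | hy'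
        · exact hlt
        · have hp := List.isChain_iff_pairwise.mp h.2
          exact lt_of_lt_of_le hlt (List.rel_of_pairwise_cons hp hy')
      have : List.count i (x :: u) = 0 :=
        List.count_eq_zero.mpr (fun hmem => lt_irrefl i (hall i hmem))
      rw [List.count_cons_self, this]

-- setEntry lemmas
lemma setEntry_map_length (v : ℕ) : ∀ (rows : List (List ℕ)) (p : ℕ),
    (setEntry rows p v).map List.length = rows.map List.length := by
  intro rows
  induction rows with
  | nil => intro p; rfl
  | cons r rs ih =>
    intro p
    rw [setEntry]
    split
    · simp
    · simp [ih]

lemma setEntry_eq (v : ℕ) : ∀ (pre : List (List ℕ)) (R : List ℕ) (post : List (List ℕ))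
    (c : ℕ), c < R.length →
    setEntry (pre ++ R :: post) (pre.flatten.length + c) v = pre ++ R.set c v :: post := by
  intro pre
  induction pre with
  | nil =>
    intro R post c hc
    simp only [List.nil_append, List.flatten_nil, List.length_nil, Nat.zero_add]
    rw [setEntry, if_pos hc]
  | cons q pre' ih =>
    intro R post c hc
    simp only [List.cons_append, List.flatten_cons, List.length_append]
    rw [setEntry, if_neg (by omega)]
    have : q.length + pre'.flatten.length + c - q.length = pre'.flatten.length + c := by omega
    rw [this, ih R post c hc]

lemma exists_decomp : ∀ (rows : List (List ℕ)) (p : ℕ), p < rows.flatten.length →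
    ∃ (pre : List (List ℕ)) (R : List ℕ) (post : List (List ℕ)) (c : ℕ),
      rows = pre ++ R :: post ∧ c < R.length ∧ p = pre.flatten.length + c := by
  intro rows
  induction rows with
  | nil => intro p hp; simp at hp
  | cons r rs ih =>
    intro p hp
    by_cases hpr : p < r.length
    · exact ⟨[], r, rs, p, by simp, hpr, by simp⟩
    · have hp' : p - r.length < rs.flatten.length := by
        simp only [List.flatten_cons, List.length_append] at hp
        omega
      obtain ⟨pre, R, post, c, h1, h2, h3⟩ := ih (p - r.length) hp'
      refine ⟨r :: pre, R, post, c, by rw [h1]; rfl, h2, ?_⟩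
      simp only [List.flatten_cons, List.length_append]
      omega

lemma mem_getD {l : List ℕ} {x : ℕ} (h : x ∈ l) :
    ∃ j, j < l.length ∧ l.getD j 0 = x := by
  obtain ⟨j, hj, hval⟩ := List.getElem_of_mem h
  exact ⟨j, hj, by rw [List.getD_eq_getElem _ _ hj, hval]⟩

lemma getD_mem {l : List ℕ} {j : ℕ} (h : j < l.length) : l.getD j 0 ∈ l := by
  rw [List.getD_eq_getElem _ _ h]
  exact List.getElem_mem h

lemma getD_take (S : List ℕ) (N j : ℕ) (hj : j < N) (hj2 : j < S.length) :
    (S.take N).getD j 0 = S.getD j 0 := by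
  have hlen : j < (S.take N).length := by rw [List.length_take]; omega
  rw [List.getD_eq_getElem _ _ hlen, List.getD_eq_getElem _ _ hj2]
  exact List.getElem_take

lemma getD_drop (S : List ℕ) (c j : ℕ) (h : c + j < S.length) :
    (S.drop c).getD j 0 = S.getD (c + j) 0 := by
  have hlen : j < (S.drop c).length := by rw [List.length_drop]; omega
  rw [List.getD_eq_getElem _ _ hlen, List.getD_eq_getElem _ _ h]
  rw [List.getElem_drop]

lemma set_middle (a : List ℕ) (u v : ℕ) (b : List ℕ) :
    (a ++ u :: b).set a.length v = a ++ v :: b := by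
  induction a with
  | nil => rfl
  | cons x a' ih => simp [List.set_cons_succ, ih]

lemma getD_middle (a : List ℕ) (u : ℕ) (b : List ℕ) :
    (a ++ u :: b).getD a.length 0 = u := by
  rw [List.getD_append_right _ _ _ _ (le_refl _), Nat.sub_self]
  rfl

lemma getD_middle_ne (a : List ℕ) (u v : ℕ) (b : List ℕ) (n : ℕ) (hn : n ≠ a.length) :
    (a ++ u :: b).getD n 0 = (a ++ v :: b).getD n 0 := by
  rcases Nat.lt_or_ge n a.length with h | h
  · rw [List.getD_append _ _ _ _ h, List.getD_append _ _ _ _ h]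
  · have h' : a.length < n := by omega
    rw [List.getD_append_right _ _ _ _ h, List.getD_append_right _ _ _ _ h]
    have : n - a.length = (n - a.length - 1) + 1 := by omega
    rw [this]
    rfl

lemma decomp_at (R : List ℕ) (c : ℕ) (h : c < R.length) :
    R = R.take c ++ R.getD c 0 :: R.drop (c+1) := by
  conv_lhs => rw [← List.take_append_drop c R]
  rw [List.drop_eq_getElem_cons h, List.getD_eq_getElem _ _ h]

lemma getD_last {a : List ℕ} (h : a ≠ []) : a.getD (a.length - 1) 0 = a.getLast h := by
  have hl : a.length - 1 < a.length := by
    have := List.length_pos_iff.mpr h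
    omega
  rw [List.getD_eq_getElem _ _ hl, List.getLast_eq_getElem]

/-- ẽ_i applied to a semistandard tableau with m_i(w_T) > 0 is again a
semistandard tableau of the same shape. -/
theorem stmt2 (i : ℕ) (hi : 2 ≤ i) (rows : List (List ℕ)) (hT : IsSSYT rows)
    (hpos : 0 < miMax i (readingWord rows)) :
    IsSSYT (setEntry rows (rightPos i (readingWord rows)) (i - 1)) ∧
    (setEntry rows (rightPos i (readingWord rows)) (i - 1)).map List.length =
      rows.map List.length := by
  have hw : readingWord rows = rows.flatten := rfl
  set w := readingWord rows with hwdef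
  obtain ⟨hplt, hpmi, hpmax⟩ := rightPos_spec i w hpos
  set p := rightPos i w with hpdef
  have hplt' : p < rows.flatten.length := by rw [← hw]; exact hplt
  obtain ⟨pre, R, post, c, hrows, hcR, hpc⟩ := exists_decomp rows p hplt'
  set a := R.take c with hadef
  set b := R.drop (c+1) with hbdef
  have halen : a.length = c := by rw [hadef, List.length_take]; omega
  have hwflat : w = pre.flatten ++ (R ++ post.flatten) := by
    rw [hw, hrows]
    simp
  have hgetD : w.getD p 0 = R.getD c 0 := by
    rw [hwflat, hpc, List.getD_append_right _ _ _ _ (by omega)]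
    have : pre.flatten.length + c - pre.flatten.length = c := by omega
    rw [this, List.getD_append _ _ _ _ hcR]
  have hRc : R.getD c 0 = i := by rw [← hgetD]; exact entry_eq i w hpos
  have hR : R = a ++ i :: b := by
    rw [hadef, hbdef, ← hRc]; exact decomp_at R c hcR
  have hmemR : R ∈ rows := by
    rw [hrows]; exact List.mem_append_right _ (List.mem_cons_self)
  obtain ⟨hT1, hT2, hT3⟩ := hT
  have hRsorted : R.Chain' (· ≤ ·) := hT2 R hmemR
  have hRset : R.set c (i-1) = a ++ (i-1) :: b := by
    rw [hR, ← halen, set_middle]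
  have hset : setEntry rows p (i-1) = pre ++ (a ++ (i-1) :: b) :: post := by
    rw [hrows, hpc, setEntry_eq _ pre R post c hcR, hRset]
  refine ⟨?_, setEntry_map_length _ rows _⟩
  rw [hset]
  refine ⟨?_, ?_, ?_⟩
  · -- positivity
    intro r hr x hx
    rcases List.mem_append.mp hr with hr | hr
    · exact hT1 r (by rw [hrows]; exact List.mem_append_left _ hr) x hx
    · rcases List.mem_cons.mp hr with rfl | hr
      · rcases List.mem_append.mp hx with hx | hx
        · exact hT1 R hmemR x (by rw [hR]; exact List.mem_append_left _ hx)
        · rcases List.mem_cons.mp hx with rfl | hx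
          · omega
          · exact hT1 R hmemR x
              (by rw [hR]; exact List.mem_append_right _ (List.mem_cons_of_mem _ hx))
      · exact hT1 r (by rw [hrows]; exact List.mem_append_right _ (List.mem_cons_of_mem _ hr)) x hx
  · -- rows sorted
    intro r hr
    rcases List.mem_append.mp hr with hr | hr
    · exact hT2 r (by rw [hrows]; exact List.mem_append_left _ hr)
    · rcases List.mem_cons.mp hr with rfl | hr
      · -- the modified row
        have hch := hRsorted
        rw [hR, List.Chain', List.isChain_append] at hch
        obtain ⟨hca, hcib, hlast⟩ := hch
        rw [List.Chain', List.isChain_append]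
        refine ⟨hca, ?_, ?_⟩
        · rw [List.isChain_cons] at hcib ⊢
          exact ⟨fun y hy => le_trans (Nat.sub_le i 1) (hcib.1 y hy), hcib.2⟩
        · intro x hx y hy
          have hy' : i - 1 = y := by simpa using hy
          subst hy'
          have hane : a ≠ [] := by intro h; rw [h] at hx; simp at hx
          have hxval : a.getLast hane = x := by
            rw [List.getLast?_eq_getLast_of_ne_nil hane] at hx
            simpa using hx
          have hx_le : x ≤ i :=
            sorted_le_of_append (hR ▸ hRsorted) x (hxval ▸ List.getLast_mem hane)
          have hc1 : 1 ≤ c := by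
            rw [← halen]
            have := List.length_pos_iff.mpr hane
            omega
          have hkval : w.getD (p-1) 0 = x := by
            rw [hwflat, hpc]
            have h1 : pre.flatten.length + c - 1 = pre.flatten.length + (c - 1) := by omega
            rw [h1, List.getD_append_right _ _ _ _ (by omega)]
            have h2 : pre.flatten.length + (c-1) - pre.flatten.length = c - 1 := by omega
            rw [h2, List.getD_append _ _ _ _ (by omega), hR,
              List.getD_append _ _ _ _ (by omega : c - 1 < a.length)]
            rw [← hxval, ← getD_last hane, halen]
          have hne := left_ne i hi w hpos (p-1) (by omega)
          rw [hkval] at hne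
          omega
      · exact hT2 r (by rw [hrows]; exact List.mem_append_right _ (List.mem_cons_of_mem _ hr))
  · -- column chain
    have hcol := hT3
    rw [hrows, List.Chain', List.isChain_append] at hcol
    obtain ⟨hcpre, hcRpost, hconn⟩ := hcol
    rw [List.isChain_cons] at hcRpost
    obtain ⟨hhead, hcpost⟩ := hcRpost
    rw [List.Chain', List.isChain_append, List.isChain_cons]
    have hlen' : (a ++ (i-1) :: b).length = R.length := by rw [hR]; simp
    refine ⟨hcpre, ⟨?_, hcpost⟩, ?_⟩
    · -- head condition: pair (R', S)
      intro S hS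
      have hPS := hhead S hS
      refine ⟨by rw [hlen']; exact hPS.1, ?_⟩
      intro c' hc'
      rw [hlen'] at hc'
      by_cases hcc : c' = a.length
      · subst hcc
        rw [getD_middle]
        have hSlt : S.getD a.length 0 < i := by
          have := hPS.2 a.length (by omega)
          rw [hR, getD_middle] at this
          exact this
        rcases Nat.lt_or_ge (S.getD a.length 0) (i-1) with h | h
        · exact h
        · exfalso
          -- the hard case : S.getD c 0 = i - 1
          have hSc : S.getD a.length 0 = i - 1 := by omega
          -- S is the head of post
          obtain ⟨post', rfl⟩ : ∃ post', post = S :: post' := by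
            cases post with
            | nil => simp at hS
            | cons S' post' =>
              have hSS : S' = S := by simpa using hS
              exact ⟨post', by rw [hSS]⟩
          have hSsorted : S.Chain' (· ≤ ·) := hT2 S (by
            rw [hrows]
            exact List.mem_append_right _ (List.mem_cons_of_mem _ (List.mem_cons_self)))
          have hIb : (i :: b).Chain' (· ≤ ·) := by
            have := hRsorted
            rw [hR, List.Chain', List.isChain_append] at this
            exact this.2.1
          obtain ⟨m, rest, hblock, hcount, hm⟩ := block_lemma i b hIb
          have hRlen : R.length = c + m + rest.length := by
            rw [hR, hblock, ← halen]
            simp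
            omega
          have hcmR : c + m ≤ R.length := by omega
          have hcmS : c + m ≤ S.length := le_trans hcmR hPS.1
          -- entries of R in the block
          have hR_eq : ∀ j, c ≤ j → j < c + m → R.getD j 0 = i := by
            intro j hj1 hj2
            rw [hR, List.getD_append_right _ _ _ _ (by omega), hblock]
            have hjc : j - a.length < m := by rw [halen]; omega
            rw [List.getD_append _ _ _ _ (by rw [List.length_replicate]; exact hjc)]
            rw [List.getD_eq_getElem _ _ (by rw [List.length_replicate]; exact hjc)]
            apply List.getElem_replicate
          have hR_le : ∀ j, j < c + m → R.getD j 0 ≤ i := by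
            intro j hj
            rcases Nat.lt_or_ge j c with h' | h'
            · rw [hR, List.getD_append _ _ _ _ (by omega : j < a.length)]
              exact sorted_le_of_append (hR ▸ hRsorted) _ (getD_mem (by omega))
            · exact le_of_eq (hR_eq j h' hj)
          -- drop p of w
          have hdrop : w.drop p = (i :: b) ++ (S ++ post'.flatten) := by
            have hw2 : w = (pre.flatten ++ a) ++ ((i :: b) ++ (S ++ post'.flatten)) := by
              rw [hwflat, hR]
              simp
            rw [hw2, hpc]
            have : pre.flatten.length + c = (pre.flatten ++ a).length := by
              rw [List.length_append, halen]
            rw [this, List.drop_left]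
          set n := (i :: b).length + (c + m) with hndef
          have hseg : (w.drop p).take n = (i :: b) ++ S.take (c + m) := by
            rw [hdrop, List.take_append]
            rw [List.take_of_length_le (by rw [hndef]; omega)]
            have h1 : n - (i::b).length = c + m := by rw [hndef]; omega
            rw [h1, List.take_append]
            have h2 : c + m - S.length = 0 := by omega
            rw [h2, List.take_zero, List.append_nil]
          have hSc' : S.getD c 0 = i - 1 := by rw [← halen]; exact hSc
          have hcm1 : 1 ≤ n := by simp only [hndef, List.length_cons]; omega
          apply key i w hpos n hcm1
          rw [← hpdef, hseg, List.count_append, List.count_append]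
          have e2 : List.count i (S.take (c+m)) = 0 := by
            apply List.count_eq_zero.mpr
            intro hmem
            obtain ⟨j, hj, hval⟩ := mem_getD hmem
            rw [List.length_take] at hj
            have hj1 : j < c + m := by omega
            have hj2 : j < S.length := by omega
            rw [getD_take S _ _ hj1 hj2] at hval
            have h3 := hPS.2 j (by omega)
            have h4 := hR_le j hj1
            omega
          have e3 : m ≤ List.count (i-1) (S.take (c+m)) := by
            have htadd : S.take (c+m) = S.take c ++ (S.drop c).take m :=
              List.take_add (l := S) (i := c) (j := m)
            have hrep : (S.drop c).take m = List.replicate m (i-1) := by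
              apply List.eq_replicate_iff.mpr
              constructor
              · rw [List.length_take, List.length_drop]; omega
              · intro x hx
                obtain ⟨j, hj, hval⟩ := mem_getD hx
                rw [List.length_take, List.length_drop] at hj
                have hj1 : j < m := by omega
                have hjS : c + j < S.length := by omega
                rw [getD_take _ _ _ hj1 (by rw [List.length_drop]; omega),
                  getD_drop _ _ _ hjS] at hval
                have hup : S.getD (c+j) 0 < i := by
                  have h5 := hPS.2 (c+j) (by omega)
                  rw [hR_eq (c+j) (by omega) (by omega)] at h5
                  exact h5
                have hlo := sorted_getD_mono hSsorted (Nat.le_add_right c j) hjS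
                omega
            rw [htadd, List.count_append, hrep, List.count_replicate_self]
            omega
          omega
      · rw [getD_middle_ne a (i-1) i b c' hcc, ← hR]
        exact hPS.2 c' (by omega)
    · -- connection pre-last to R'
      intro x hx y hy
      have hy' : a ++ (i-1) :: b = y := by simpa using hy
      subst hy'
      have hPxR := hconn x hx R (by simp)
      refine ⟨by rw [hlen']; exact hPxR.1, ?_⟩
      intro c' hc'
      have hlt := hPxR.2 c' hc'
      by_cases hcc : c' = a.length
      · subst hcc
        rw [getD_middle]
        rw [hR, getD_middle] at hlt
        omega
      · rw [getD_middle_ne a (i-1) i b c' hcc, ← hR]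
        exact hlt
end

section
/- Let u and v be permutations of {1,...,n} whose one-line words differ by an elementary dual equivalence on the three consecutive values i−1, i, i+1 (swapping the positions of the two outer values when the middle value i is not positioned between them). Then the descent sets of u and v satisfy: i−1 ∈ Des(u) if and only if i−1 ∉ Des(v), and i ∈ Des(u) if and only if i ∉ Des(v). -/
/-- Swap the values x and y in a word. -/
def swapVals (x y : ℕ) (w : List ℕ) : List ℕ :=
  w.map (fun z => if z = x then y else if z = y then x else z)

/-- Haiman's elementary dual equivalence on the values i-1, i, i+1:
applicable when i is not the middle one of the three (by position), it
exchanges i with the other outer value. -/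
def EDE (i : ℕ) (u v : List ℕ) : Prop :=
  2 ≤ i ∧
  ((u.idxOf i < u.idxOf (i + 1) ∧ u.idxOf (i + 1) < u.idxOf (i - 1) ∧
      v = swapVals i (i - 1) u) ∨
   (u.idxOf i < u.idxOf (i - 1) ∧ u.idxOf (i - 1) < u.idxOf (i + 1) ∧
      v = swapVals i (i + 1) u) ∨
   (u.idxOf (i - 1) < u.idxOf (i + 1) ∧ u.idxOf (i + 1) < u.idxOf i ∧
      v = swapVals i (i - 1) u) ∨
   (u.idxOf (i + 1) < u.idxOf (i - 1) ∧ u.idxOf (i - 1) < u.idxOf i ∧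
      v = swapVals i (i + 1) u))

/-- j is a descent of w if j+1 appears to the left of j. -/
def Des (w : List ℕ) : Set ℕ := {j | w.idxOf (j + 1) < w.idxOf j}


lemma findIdx_map' {α β : Type} (f : α → β) (p : β → Bool) (l : List α) :
    List.findIdx p (l.map f) = List.findIdx (fun a => p (f a)) l := by
  induction l with
  | nil => rfl
  | cons a l ih => simp [List.findIdx_cons, ih]

lemma swap_indexOf (x y : ℕ) (hxy : x ≠ y) (u : List ℕ) (z : ℕ) :
    (swapVals x y u).idxOf z = u.idxOf (if z = x then y else if z = y then x else z) := by
  unfold swapVals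
  rw [List.idxOf, List.idxOf, findIdx_map']
  congr 1
  funext a
  by_cases hax : a = x <;> by_cases hay : a = y <;>
    by_cases hzx : z = x <;> by_cases hzy : z = y <;>
    simp_all [beq_iff_eq] <;> omega

/-- An elementary dual equivalence for i-1, i, i+1 toggles the descents at
positions i-1 and i. -/
theorem stmt4 (n i : ℕ) (u v : List ℕ) (hu : u.Perm (List.range' 1 n))
    (hin : i + 1 ≤ n) (h : EDE i u v) :
    ((i - 1) ∈ Des u ↔ (i - 1) ∉ Des v) ∧ (i ∈ Des u ↔ i ∉ Des v) := by
  obtain ⟨hi, hc⟩ := h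
  have h1 : i - 1 + 1 = i := by omega
  have h2 : i ≠ i - 1 := by omega
  have h3 : i ≠ i + 1 := by omega
  rcases hc with ⟨ha, hb, rfl⟩ | ⟨ha, hb, rfl⟩ | ⟨ha, hb, rfl⟩ | ⟨ha, hb, rfl⟩ <;>
    simp only [Des, Set.mem_setOf_eq, h1, swap_indexOf _ _ h2, swap_indexOf _ _ h3] <;>
    split_ifs <;> omega
end

section
/- The standard dual equivalence graph G_λ satisfies axiom (ax2): if standard tableaux T, U of shape λ ⊢ n are joined by an i-edge (their reading words differ by an elementary dual equivalence on i−1,i,i+1), then σ(T)_j = −σ(U)_j for j ∈ {i−1, i}, and σ(T)_h = σ(U)_h for all h with h < i−2 or h > i+1. -/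
/-- A standard Young tableau with entries exactly 1, ..., n. -/
def IsSYT (n : ℕ) (rows : List (List ℕ)) : Prop :=
  IsSSYT rows ∧ (readingWord rows).Perm (List.range' 1 n)

/-- The signature: +1 if j appears to the left of j+1, -1 otherwise. -/
def sgn (w : List ℕ) (j : ℕ) : ℤ :=
  if w.idxOf j < w.idxOf (j + 1) then 1 else -1


lemma indexOf_map_invol (f : ℕ → ℕ) (hf : Function.Involutive f) (w : List ℕ) (z : ℕ) :
    (w.map f).idxOf z = w.idxOf (f z) := by
  induction w with
  | nil => simp
  | cons a t ih =>
    simp only [List.map_cons, List.idxOf_cons, ih]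
    have : (f a == z) = (a == f z) := by
      by_cases h : f a = z
      · have h2 : a = f z := by rw [← h, hf a]
        simp [h, h2, hf z]
      · have h2 : a ≠ f z := fun ha => h (ha ▸ hf z)
        simp [h, h2]
    rw [this]

lemma indexOf_swapVals (x y z : ℕ) (w : List ℕ) :
    (swapVals x y w).idxOf z =
      w.idxOf (if z = x then y else if z = y then x else z) := by
  apply indexOf_map_invol
  intro a
  by_cases h1 : a = x <;> by_cases h2 : a = y <;> by_cases h3 : x = y <;> simp_all

lemma sgn_swapVals_far {x y h' : ℕ} (w : List ℕ) (h1 : h' ≠ x) (h2 : h' ≠ y)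
    (h3 : h' + 1 ≠ x) (h4 : h' + 1 ≠ y) : sgn (swapVals x y w) h' = sgn w h' := by
  simp only [sgn, indexOf_swapVals, if_neg h1, if_neg h2, if_neg h3, if_neg h4]

/-- Axiom (ax2): along an i-edge the signature flips in positions i-1 and i
and is unchanged in positions h < i-2 and h > i+1. -/
theorem stmt15 (n i : ℕ) (T U : List (List ℕ)) (hT : IsSYT n T) (hU : IsSYT n U)
    (hsh : U.map List.length = T.map List.length)
    (h : EDE i (readingWord T) (readingWord U)) :
    sgn (readingWord T) (i - 1) = - sgn (readingWord U) (i - 1) ∧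
    sgn (readingWord T) i = - sgn (readingWord U) i ∧
    (∀ h', 1 ≤ h' → h' + 1 ≤ n → (h' < i - 2 ∨ i + 1 < h') →
      sgn (readingWord T) h' = sgn (readingWord U) h') := by
  obtain ⟨hi, hc⟩ := h
  set u := readingWord T with hu
  have hi1 : i - 1 + 1 = i := by omega
  rcases hc with ⟨h1, h2, hv⟩ | ⟨h1, h2, hv⟩ | ⟨h1, h2, hv⟩ | ⟨h1, h2, hv⟩ <;> rw [hv] <;>
  [ (have ea : (swapVals i (i - 1) u).idxOf (i - 1) = u.idxOf i := by
       rw [indexOf_swapVals, if_neg (by omega), if_pos rfl]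
     have eb : (swapVals i (i - 1) u).idxOf i = u.idxOf (i - 1) := by
       rw [indexOf_swapVals, if_pos rfl]
     have ec : (swapVals i (i - 1) u).idxOf (i + 1) = u.idxOf (i + 1) := by
       rw [indexOf_swapVals, if_neg (by omega), if_neg (by omega)]
     skip);
    (have ea : (swapVals i (i + 1) u).idxOf (i - 1) = u.idxOf (i - 1) := by
       rw [indexOf_swapVals, if_neg (by omega), if_neg (by omega)]
     have eb : (swapVals i (i + 1) u).idxOf i = u.idxOf (i + 1) := by
       rw [indexOf_swapVals, if_pos rfl]
     have ec : (swapVals i (i + 1) u).idxOf (i + 1) = u.idxOf i := by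
       rw [indexOf_swapVals, if_neg (by omega), if_pos rfl]
     skip);
    (have ea : (swapVals i (i - 1) u).idxOf (i - 1) = u.idxOf i := by
       rw [indexOf_swapVals, if_neg (by omega), if_pos rfl]
     have eb : (swapVals i (i - 1) u).idxOf i = u.idxOf (i - 1) := by
       rw [indexOf_swapVals, if_pos rfl]
     have ec : (swapVals i (i - 1) u).idxOf (i + 1) = u.idxOf (i + 1) := by
       rw [indexOf_swapVals, if_neg (by omega), if_neg (by omega)]
     skip);
    (have ea : (swapVals i (i + 1) u).idxOf (i - 1) = u.idxOf (i - 1) := by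
       rw [indexOf_swapVals, if_neg (by omega), if_neg (by omega)]
     have eb : (swapVals i (i + 1) u).idxOf i = u.idxOf (i + 1) := by
       rw [indexOf_swapVals, if_pos rfl]
     have ec : (swapVals i (i + 1) u).idxOf (i + 1) = u.idxOf i := by
       rw [indexOf_swapVals, if_neg (by omega), if_pos rfl]
     skip)] <;>
  · refine ⟨?_, ?_, ?_⟩
    · simp only [sgn, hi1, ea, eb]
      split_ifs <;> omega
    · simp only [sgn, eb, ec]
      split_ifs <;> omega
    · intro h' _ _ hh3
      exact (sgn_swapVals_far u (by omega) (by omega) (by omega) (by omega)).symm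
end

section
/- The standard dual equivalence graph G_λ satisfies axiom (ax5): if |i−j| ≥ 3 and T admits both an i-edge (to U) and U admits a j-edge (to W), then there is a standard tableau X with a j-edge from T to X and an i-edge from X to W; equivalently, the involutions D_i and D_j commute on tableaux where both are defined. -/
namespace Stmt17Aux

def sw (x y : ℕ) : ℕ → ℕ := fun z => if z = x then y else if z = y then x else z

lemma swapVals_eq_map (x y : ℕ) (w : List ℕ) : swapVals x y w = w.map (sw x y) := rfl

lemma sw_invol (x y z : ℕ) : sw x y (sw x y z) = z := by
  unfold sw; split_ifs <;> omega

lemma sw_eq_iff {x y c : ℕ} (hx : c ≠ x) (hy : c ≠ y) (z : ℕ) : sw x y z = c ↔ z = c := by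
  unfold sw; split_ifs <;> omega

lemma sw_comm {x y x' y' : ℕ} (h1 : x ≠ x') (h2 : x ≠ y') (h3 : y ≠ x') (h4 : y ≠ y')
    (z : ℕ) : sw x y (sw x' y' z) = sw x' y' (sw x y z) := by
  unfold sw; split_ifs <;> omega

lemma idxOf_map_eq {f : ℕ → ℕ} {c : ℕ} (hf : ∀ z, f z = c ↔ z = c) (w : List ℕ) :
    (w.map f).idxOf c = w.idxOf c := by
  induction w with
  | nil => rfl
  | cons a l ih =>
    simp only [List.map_cons, List.idxOf_cons, ih]
    by_cases h : a = c
    · subst h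
      have h2 : f a = a := (hf a).2 rfl
      simp [h2]
    · have h2 : f a ≠ c := fun hc => h ((hf a).1 hc)
      have e1 : (f a == c) = false := beq_false_of_ne h2
      have e2 : (a == c) = false := beq_false_of_ne h
      simp [e1, e2]

lemma count_map_sw (x y z : ℕ) (l : List ℕ) :
    (l.map (sw x y)).count z = l.count (sw x y z) := by
  simp only [List.count, List.countP_map]
  apply List.countP_congr
  intro b _
  simp only [Function.comp_apply, beq_iff_eq]
  constructor
  · intro h; rw [← h, sw_invol]
  · intro h; rw [h, sw_invol]

lemma map_sw_perm {x y : ℕ} {l : List ℕ} (hl : l.Nodup) (hx : x ∈ l) (hy : y ∈ l) :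
    (l.map (sw x y)).Perm l := by
  rw [List.perm_iff_count]
  intro z
  rw [count_map_sw]
  by_cases hzx : z = x
  · have h : sw x y z = y := by simp [sw, hzx]
    rw [h, hzx, List.count_eq_one_of_mem hl hy, List.count_eq_one_of_mem hl hx]
  · by_cases hzy : z = y
    · have h : sw x y z = x := by simp [sw, hzx, hzy]
      rw [h, hzy, List.count_eq_one_of_mem hl hx, List.count_eq_one_of_mem hl hy]
    · have h : sw x y z = z := by simp [sw, hzx, hzy]
      rw [h]

lemma flatten_lengths_eq : ∀ {A B : List (List ℕ)}, A.map List.length = B.map List.length →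
    A.flatten = B.flatten → A = B := by
  intro A
  induction A with
  | nil => intro B h _; cases B <;> simp_all
  | cons a A ih =>
    intro B h hf
    cases B with
    | nil => simp_all
    | cons b B =>
      simp only [List.map_cons, List.cons.injEq] at h
      simp only [List.flatten_cons] at hf
      obtain ⟨hab, hAB⟩ := List.append_inj hf h.1
      rw [hab, ih h.2 hAB]

lemma cmp_lt {i a j b : ℕ} (hia : a = i-1 ∨ a = i+1) (hjb : b = j-1 ∨ b = j+1)
    (hi2 : 2 ≤ i) (hj2 : 2 ≤ j) (hgap : i+3 ≤ j ∨ j+3 ≤ i) {u v : ℕ}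
    (h1 : u < v) (h2 : sw i a (sw j b u) < sw i a (sw j b v)) : sw j b u < sw j b v := by
  unfold sw at h2 ⊢; split_ifs at h2 ⊢ <;> omega

lemma cmp_le {i a j b : ℕ} (hia : a = i-1 ∨ a = i+1) (hjb : b = j-1 ∨ b = j+1)
    (hi2 : 2 ≤ i) (hj2 : 2 ≤ j) (hgap : i+3 ≤ j ∨ j+3 ≤ i) {u v : ℕ}
    (h1 : u ≤ v) (h2 : sw i a (sw j b u) ≤ sw i a (sw j b v)) : sw j b u ≤ sw j b v := by
  unfold sw at h2 ⊢; split_ifs at h2 ⊢ <;> omega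

lemma chain'_comb {α : Type*} {R S Q : α → α → Prop} (h : ∀ a b, R a b → S a b → Q a b)
    {l : List α} (h1 : l.Chain' R) (h2 : l.Chain' S) : l.Chain' Q := by
  unfold List.Chain' at h1 h2 ⊢
  rw [List.isChain_iff_getElem] at h1 h2 ⊢
  intro i hi
  exact h _ _ (h1 i hi) (h2 i hi)

lemma EDE_extract {k n : ℕ} {u v : List ℕ} (h : EDE k u v)
    (hu : u.Perm (List.range' 1 n)) (hv : v.Perm (List.range' 1 n)) :
    ∃ b, (b = k - 1 ∨ b = k + 1) ∧ v = swapVals k b u ∧ k + 1 ≤ n ∧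
      ∀ u' v' : List ℕ, u'.idxOf (k-1) = u.idxOf (k-1) → u'.idxOf k = u.idxOf k →
        u'.idxOf (k+1) = u.idxOf (k+1) → v' = swapVals k b u' → EDE k u' v' := by
  obtain ⟨hk2, hc⟩ := h
  have hmem : ∀ {x y : ℕ}, u.idxOf x < u.idxOf y → x ∈ u := fun h' =>
    List.idxOf_lt_length_iff.mp (lt_of_lt_of_le h' List.idxOf_le_length)
  have hbound : ∀ {x}, x ∈ u → x < 1 + n := fun hx => (List.mem_range'_1.mp (hu.mem_iff.mp hx)).2
  have hboundv : ∀ {x}, x ∈ v → x < 1 + n := fun hx => (List.mem_range'_1.mp (hv.mem_iff.mp hx)).2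
  rcases hc with ⟨c1,c2,c3⟩|⟨c1,c2,c3⟩|⟨c1,c2,c3⟩|⟨c1,c2,c3⟩
  · refine ⟨k-1, Or.inl rfl, c3, ?_, ?_⟩
    · have := hbound (hmem c2); omega
    · intro u' v' e0 e1 e2 hv'
      exact ⟨hk2, Or.inl ⟨by rw [e1, e2]; exact c1, by rw [e2, e0]; exact c2, hv'⟩⟩
  · refine ⟨k+1, Or.inr rfl, c3, ?_, ?_⟩
    · have hk : k ∈ u := hmem c1
      have : (k+1) ∈ v := by
        rw [c3, swapVals_eq_map]
        exact List.mem_map.mpr ⟨k, hk, by simp [sw]⟩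
      have := hboundv this; omega
    · intro u' v' e0 e1 e2 hv'
      exact ⟨hk2, Or.inr (Or.inl ⟨by rw [e1, e0]; exact c1, by rw [e0, e2]; exact c2, hv'⟩)⟩
  · refine ⟨k-1, Or.inl rfl, c3, ?_, ?_⟩
    · have := hbound (hmem c2); omega
    · intro u' v' e0 e1 e2 hv'
      exact ⟨hk2, Or.inr (Or.inr (Or.inl ⟨by rw [e0, e2]; exact c1, by rw [e2, e1]; exact c2, hv'⟩))⟩
  · refine ⟨k+1, Or.inr rfl, c3, ?_, ?_⟩
    · have := hbound (hmem c1); omega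
    · intro u' v' e0 e1 e2 hv'
      exact ⟨hk2, Or.inr (Or.inr (Or.inr ⟨by rw [e2, e0]; exact c1, by rw [e0, e1]; exact c2, hv'⟩))⟩

end Stmt17Aux


open Stmt17Aux

/-- Axiom (ax5): for |i - j| ≥ 3 the involutions D_i and D_j commute. -/
theorem stmt17 (n i j : ℕ) (hij : 3 ≤ |(i : ℤ) - (j : ℤ)|)
    (T U W : List (List ℕ)) (hT : IsSYT n T) (hU : IsSYT n U) (hW : IsSYT n W)
    (hshU : U.map List.length = T.map List.length)
    (hshW : W.map List.length = T.map List.length)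
    (h1 : EDE i (readingWord T) (readingWord U))
    (h2 : EDE j (readingWord U) (readingWord W)) :
    ∃ X : List (List ℕ), IsSYT n X ∧ X.map List.length = T.map List.length ∧
      EDE j (readingWord T) (readingWord X) ∧
      EDE i (readingWord X) (readingWord W) := by
  classical
  have hgap : i + 3 ≤ j ∨ j + 3 ≤ i := by
    rcases abs_cases ((i:ℤ) - (j:ℤ)) with ⟨h,_⟩|⟨h,_⟩ <;> [right; left] <;> omega
  have hi2 : 2 ≤ i := h1.1
  have hj2 : 2 ≤ j := h2.1
  obtain ⟨a, hia, hUw, hin, hEDEi⟩ := EDE_extract h1 hT.2 hU.2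
  obtain ⟨b, hjb, hWw, hjn, hEDEj⟩ := EDE_extract h2 hU.2 hW.2
  set f := sw i a with hf
  set g := sw j b with hg
  -- disequalities
  have dij : i ≠ j := by omega
  have dib : i ≠ b := by omega
  have daj : a ≠ j := by omega
  have dab : a ≠ b := by omega
  -- the candidate
  set X := T.map (List.map g) with hX
  have hXw : readingWord X = (readingWord T).map g := by
    simp only [hX, readingWord, List.map_flatten]
  have hXsh : X.map List.length = T.map List.length := by
    simp only [hX, List.map_map, Function.comp_def, List.length_map]
  -- reading words
  have hUw' : readingWord U = (readingWord T).map f := hUw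
  have hWw' : readingWord W = ((readingWord T).map f).map g := by
    rw [hWw, hUw']; rfl
  have hcomm : ∀ w : List ℕ, (w.map g).map f = (w.map f).map g := by
    intro w
    rw [List.map_map, List.map_map]
    congr 1
    funext z
    exact sw_comm dij.symm daj.symm dib.symm dab.symm z |>.symm
  have hWXw : readingWord W = (readingWord X).map f := by
    rw [hWw', hXw, hcomm]
  -- W = X.map (map f)
  have hWX : W = X.map (List.map f) := by
    apply flatten_lengths_eq
    · rw [hshW, ← hXsh]
      simp only [List.map_map, Function.comp_def, List.length_map]
    · show readingWord W = readingWord (X.map (List.map f))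
      rw [hWXw]
      simp only [readingWord, List.map_flatten]
  -- index transfers
  have idxTU : ∀ c, c ≠ i → c ≠ a → (readingWord T).idxOf c = (readingWord U).idxOf c := by
    intro c hc1 hc2
    rw [hUw']
    exact (idxOf_map_eq (sw_eq_iff hc1 hc2) _).symm
  have idxXT : ∀ c, c ≠ j → c ≠ b → (readingWord X).idxOf c = (readingWord T).idxOf c := by
    intro c hc1 hc2
    rw [hXw]
    exact idxOf_map_eq (sw_eq_iff hc1 hc2) _
  -- the two EDE facts
  have hEDEjTX : EDE j (readingWord T) (readingWord X) := by
    refine hEDEj _ _ (idxTU _ (by omega) (by omega)) (idxTU _ (by omega) (by omega))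
      (idxTU _ (by omega) (by omega)) ?_
    rw [hXw]; rfl
  have hEDEiXW : EDE i (readingWord X) (readingWord W) := by
    refine hEDEi _ _ (idxXT _ (by omega) (by omega)) (idxXT _ (by omega) (by omega))
      (idxXT _ (by omega) (by omega)) ?_
    rw [hWXw]; rfl
  -- permutation
  have hXperm : (readingWord X).Perm (List.range' 1 n) := by
    rw [hXw]
    refine (hT.2.map g).trans ?_
    exact map_sw_perm (List.nodup_range' (s := 1) (n := n)) (List.mem_range'_1.mpr ⟨by omega, by omega⟩)
      (List.mem_range'_1.mpr ⟨by omega, by omega⟩)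
  -- SSYT
  have hpos : ∀ r ∈ X, ∀ x ∈ r, 1 ≤ x := by
    intro r hr x hx
    have : x ∈ readingWord X := List.mem_flatten.mpr ⟨r, hr, hx⟩
    exact (List.mem_range'_1.mp (hXperm.mem_iff.mp this)).1
  have hrows : ∀ r ∈ X, r.Chain' (· ≤ ·) := by
    intro r hr
    obtain ⟨t, ht, rfl⟩ := List.mem_map.1 hr
    have hTrow : t.Chain' (· ≤ ·) := hT.1.2.1 t ht
    have hWmem : (t.map g).map f ∈ W := by
      rw [hWX]
      exact List.mem_map_of_mem (f := List.map f) hr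
    have hWrow : ((t.map g).map f).Chain' (· ≤ ·) := hW.1.2.1 _ hWmem
    unfold List.Chain' at hWrow ⊢
    rw [List.map_map, List.isChain_map] at hWrow
    rw [List.isChain_map]
    exact chain'_comb (fun x y hR hS => cmp_le hia hjb hi2 hj2 hgap hR hS) hTrow hWrow
  have hcols : X.Chain' (fun upper lower =>
      upper.length ≤ lower.length ∧
      ∀ c < upper.length, lower.getD c 0 < upper.getD c 0) := by
    have hTc := hT.1.2.2
    have hWc := hW.1.2.2
    unfold List.Chain' at hWc ⊢
    rw [hWX, hX, List.map_map, List.isChain_map] at hWc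
    rw [hX, List.isChain_map]
    refine chain'_comb ?_ hTc hWc
    intro r s hR hS
    simp only [Function.comp_def, List.map_map] at hS
    refine ⟨by simpa using hR.1, ?_⟩
    intro c hc
    simp only [List.length_map] at hc
    have hcs : c < s.length := lt_of_lt_of_le hc hR.1
    have e1 : (s.map g).getD c 0 = g s[c] := by
      rw [List.getD_eq_getElem _ _ (by simpa using hcs)]
      simp
    have e2 : (r.map g).getD c 0 = g r[c] := by
      rw [List.getD_eq_getElem _ _ (by simpa using hc)]
      simp
    rw [e1, e2]
    have hRlt : s[c] < r[c] := by
      have := hR.2 c hc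
      rwa [List.getD_eq_getElem _ _ hcs, List.getD_eq_getElem _ _ hc] at this
    have hSlt : f (g s[c]) < f (g r[c]) := by
      have := hS.2 c (by simpa using hc)
      rwa [List.getD_eq_getElem _ _ (by simpa using hcs),
        List.getD_eq_getElem _ _ (by simpa using hc), List.getElem_map, List.getElem_map] at this
    exact cmp_lt hia hjb hi2 hj2 hgap hRlt hSlt
  exact ⟨X, ⟨⟨hpos, hrows, hcols⟩, hXperm⟩, hXsh, hEDEjTX, hEDEiXW⟩
end
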